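/- If the elastic Herglotz wave function v_g with kernel g ∈ 𝓛²(𝕊), defined by v_g(x) = e^{−iπ/4} ∫_𝕊 { √(k_p/ω) d e^{−i k_p x·d} g_p(d) + √(k_s/ω) d^⊥ e^{−i k_s x·d} g_s(d) } ds(d), vanishes for all x ∈ ℝ², then g = 0 (i.e. g_p = 0 and g_s = 0 in L²(𝕊)). This holds both when k_p ≠ k_s and when k_p = k_s. -/

import Mathlib

/-!
STATEMENT 0: If the elastic Herglotz wave function `v_g` with kernel
`g = (g_p, g_s) ∈ 𝓛²(𝕊)`, given by
`v_g(x) = e^{−iπ/4} ∫_𝕊 { √(k_p/ω) d e^{−i k_p x·d} g_p(d) + √(k_s/ω) d^⊥ e^{−i k_s x·d} g_s(d) } ds(d)`,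
vanishes for all `x ∈ ℝ²`, then `g = 0` (i.e. `g_p = 0` and `g_s = 0` in `L²(𝕊)`).
This holds both when `k_p ≠ k_s` and when `k_p = k_s`.

The unit circle `𝕊` is parametrized by the angle `θ ∈ (0, 2π]`, with
`d(θ) = (cos θ, sin θ)` and `d(θ)^⊥ = (−sin θ, cos θ)`; `𝓛²(𝕊)` membership of the
kernel is expressed as `Memℒp _ 2` with respect to Lebesgue measure on `(0, 2π]`,
and the two components of the vector-valued Herglotz wave function are written out
separately.
-/

open MeasureTheory
open Set

/-- Lebesgue (arclength) measure on the angle parametrization of the unit circle. -/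
noncomputable def circleMeasure : Measure ℝ := volume.restrict (Set.Ioc (0 : ℝ) (2 * Real.pi))

instance : IsFiniteMeasure circleMeasure :=
  ⟨by rw [circleMeasure, Measure.restrict_apply_univ]; exact measure_Ioc_lt_top⟩

/-- helper: bounded continuous times integrable is integrable -/
lemma int_mul {f : ℝ → ℂ} (hf : Integrable f circleMeasure) {φ : ℝ → ℂ} (hφ : Continuous φ)
    {C : ℝ} (hC : ∀ θ, ‖φ θ‖ ≤ C) : Integrable (fun θ => φ θ * f θ) circleMeasure :=
  hf.bdd_mul hφ.aestronglyMeasurable (Filter.Eventually.of_forall hC)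

/-- Fourier uniqueness on the circle parametrized by `Ioc 0 (2π)`. -/
lemma fourier_uniq {f : ℝ → ℂ} (hf : MemLp f 2 circleMeasure)
    (h : ∀ n : ℤ, ∫ θ, f θ * Complex.exp (n * θ * Complex.I) ∂circleMeasure = 0) :
    f =ᵐ[circleMeasure] 0 := by
  haveI hfact : Fact (0 < 2 * Real.pi) := ⟨by positivity⟩
  obtain ⟨f', hf'm, hff'⟩ := hf.1
  have hf' : MemLp f' 2 circleMeasure := hf.ae_eq hff'
  have h' : ∀ n : ℤ, ∫ θ, f' θ * Complex.exp (n * θ * Complex.I) ∂circleMeasure = 0 := by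
    intro n
    rw [← h n]
    apply integral_congr_ae
    filter_upwards [hff'] with θ hθ
    rw [hθ]
  set T : ℝ := 2 * Real.pi with hT
  set fc : AddCircle T → ℂ := AddCircle.liftIoc T 0 f' with hfc
  have hIoc : Ioc (0 : ℝ) (0 + T) = Ioc 0 T := by rw [zero_add]
  have hcm : circleMeasure = volume.restrict (Ioc (0:ℝ) (0 + T)) := by
    rw [hIoc, circleMeasure]
  have mp := AddCircle.measurePreserving_mk T 0
  have hfcm : StronglyMeasurable fc := by
    have hm : Measurable fun z : AddCircle T => ((AddCircle.equivIoc T 0) z : ℝ) :=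
      measurable_subtype_coe.comp (AddCircle.measurableEquivIoc T 0).measurable
    exact hf'm.comp_measurable hm
  have hcompeq : (fun θ : ℝ => fc ((θ : AddCircle T))) =ᵐ[circleMeasure] f' := by
    rw [hcm]
    filter_upwards [ae_restrict_mem measurableSet_Ioc] with θ hθ
    exact AddCircle.liftIoc_coe_apply hθ
  have hmkmeas : Measurable ((↑) : ℝ → AddCircle T) := AddCircle.measurable_mk'
  have hfcLp : MemLp fc 2 (volume : Measure (AddCircle T)) := by
    rw [← mp.map_eq, memLp_map_measure_iff hfcm.aestronglyMeasurable hmkmeas.aemeasurable]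
    have : MemLp (fc ∘ ((↑) : ℝ → AddCircle T)) 2 circleMeasure := hf'.ae_eq hcompeq.symm
    rwa [hcm] at this
  have hTne : ENNReal.ofReal T ≠ 0 := ne_of_gt (ENNReal.ofReal_pos.mpr hfact.out)
  have hhaar : (AddCircle.haarAddCircle : Measure (AddCircle T))
      = (ENNReal.ofReal T)⁻¹ • (volume : Measure (AddCircle T)) := by
    rw [AddCircle.volume_eq_smul_haarAddCircle, smul_smul,
      ENNReal.inv_mul_cancel hTne ENNReal.ofReal_ne_top, one_smul]
  have hfcHaar : MemLp fc 2 (AddCircle.haarAddCircle : Measure (AddCircle T)) := by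
    rw [hhaar]
    exact hfcLp.smul_measure (ENNReal.inv_ne_top.mpr hTne)
  have hco : ∀ n : ℤ, fourierCoeff fc n = 0 := by
    intro n
    rw [fourierCoeff_eq_intervalIntegral fc n 0]
    have hz : ∫ x in (0:ℝ)..(0+T), (fourier (-n)) (x : AddCircle T) • fc x = 0 := by
      rw [intervalIntegral.integral_of_le (by positivity), ← hcm, ← h' (-n)]
      apply integral_congr_ae
      filter_upwards [hcompeq] with θ hθ
      rw [hθ, fourier_coe_apply, smul_eq_mul, mul_comm]
      have hTne0 : ((T : ℝ) : ℂ) ≠ 0 := Complex.ofReal_ne_zero.mpr (ne_of_gt hfact.out)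
      have harg : (2 * (Real.pi : ℂ) * Complex.I * ((-n : ℤ) : ℂ) * (θ : ℂ) / ((T : ℝ) : ℂ))
          = ((-n : ℤ) : ℂ) * (θ : ℂ) * Complex.I := by
        rw [div_eq_iff hTne0, hT]
        push_cast
        ring
      rw [harg]
    rw [hz, smul_zero]
  have hrep : ∀ i : ℤ, fourierBasis.repr (hfcHaar.toLp fc) i = 0 := by
    intro i
    rw [fourierBasis_repr]
    have hc : fourierCoeff (((hfcHaar.toLp fc) : Lp ℂ 2 (AddCircle.haarAddCircle)) : AddCircle T → ℂ) i
        = fourierCoeff fc i := by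
      unfold fourierCoeff
      apply integral_congr_ae
      filter_upwards [hfcHaar.coeFn_toLp] with z hz
      rw [hz]
    rw [hc]
    exact hco i
  have hFL0 : hfcHaar.toLp fc = 0 := by
    have hr0 : fourierBasis.repr (hfcHaar.toLp fc) = 0 := by
      apply lp.ext
      funext i
      rw [hrep i]
      simp
    exact (LinearIsometryEquiv.map_eq_zero_iff fourierBasis.repr).mp hr0
  have hfc0 : fc =ᵐ[(AddCircle.haarAddCircle : Measure (AddCircle T))] 0 := by
    have h1 := hfcHaar.coeFn_toLp
    rw [hFL0] at h1
    exact h1.symm.trans (Lp.coeFn_zero ℂ 2 _)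
  have hvol : fc =ᵐ[(volume : Measure (AddCircle T))] 0 := by
    rw [AddCircle.volume_eq_smul_haarAddCircle]
    exact Measure.ae_smul_measure hfc0 _
  have hpull : (fc ∘ ((↑) : ℝ → AddCircle T)) =ᵐ[circleMeasure] (0 : AddCircle T → ℂ) ∘ ((↑) : ℝ → AddCircle T) := by
    rw [hcm]
    exact mp.quasiMeasurePreserving.ae_eq_comp hvol
  have hf'0 : f' =ᵐ[circleMeasure] 0 := hcompeq.symm.trans hpull
  exact hff'.trans hf'0


/-- Stone–Weierstrass step. -/
lemma sw_key {kp ks : ℝ} (hkp : 0 < kp) (hlt : kp < ks)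
    {F G : ℝ → ℂ} (hF : Integrable F circleMeasure) (hG : Integrable G circleMeasure)
    (h : ∀ x : ℝ × ℝ,
      ∫ θ, (F θ * Complex.exp (-Complex.I * ((kp * (x.1 * Real.cos θ + x.2 * Real.sin θ) : ℝ) : ℂ)) +
            G θ * Complex.exp (-Complex.I * ((ks * (x.1 * Real.cos θ + x.2 * Real.sin θ) : ℝ) : ℂ)))
        ∂circleMeasure = 0) :
    ∀ w : C(ℝ × ℝ, ℂ),
      ∫ θ, (F θ * w (kp * Real.cos θ, kp * Real.sin θ) +
            G θ * w (ks * Real.cos θ, ks * Real.sin θ)) ∂circleMeasure = 0 := by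
  have hks : 0 < ks := hkp.trans hlt
  set K : Set (ℝ × ℝ) := Metric.closedBall 0 ks with hK
  haveI : CompactSpace K := isCompact_iff_compactSpace.mp (isCompact_closedBall _ _)
  have memK : ∀ (k : ℝ), 0 ≤ k → k ≤ ks → ∀ θ : ℝ, (k * Real.cos θ, k * Real.sin θ) ∈ K := by
    intro k hk0 hkks θ
    rw [hK, Metric.mem_closedBall, dist_zero_right, Prod.norm_def]
    have h1 : ‖k * Real.cos θ‖ ≤ ks := by
      rw [Real.norm_eq_abs, abs_mul, abs_of_nonneg hk0]
      calc k * |Real.cos θ| ≤ k * 1 := by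
            exact mul_le_mul_of_nonneg_left (Real.abs_cos_le_one θ) hk0
        _ ≤ ks := by linarith
    have h2 : ‖k * Real.sin θ‖ ≤ ks := by
      rw [Real.norm_eq_abs, abs_mul, abs_of_nonneg hk0]
      calc k * |Real.sin θ| ≤ k * 1 := by
            exact mul_le_mul_of_nonneg_left (Real.abs_sin_le_one θ) hk0
        _ ≤ ks := by linarith
    exact max_le h1 h2
  set pm : ℝ → K := fun θ => ⟨(kp * Real.cos θ, kp * Real.sin θ), memK kp hkp.le hlt.le θ⟩ with hpm
  set ps : ℝ → K := fun θ => ⟨(ks * Real.cos θ, ks * Real.sin θ), memK ks hks.le le_rfl θ⟩ with hps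
  have hpmc : Continuous pm := Continuous.subtype_mk (by fun_prop) _
  have hpsc : Continuous ps := Continuous.subtype_mk (by fun_prop) _
  -- integrability
  have intF : ∀ w : C(K, ℂ), Integrable (fun θ => F θ * w (pm θ)) circleMeasure := by
    intro w
    have e : (fun θ => F θ * w (pm θ)) = fun θ => (w (pm θ)) * F θ := by
      funext θ; ring
    rw [e]
    exact hF.bdd_mul ((w.continuous.comp hpmc)).aestronglyMeasurable
      (Filter.Eventually.of_forall fun θ => w.norm_coe_le_norm _)
  have intG : ∀ w : C(K, ℂ), Integrable (fun θ => G θ * w (ps θ)) circleMeasure := by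
    intro w
    have e : (fun θ => G θ * w (ps θ)) = fun θ => (w (ps θ)) * G θ := by
      funext θ; ring
    rw [e]
    exact hG.bdd_mul ((w.continuous.comp hpsc)).aestronglyMeasurable
      (Filter.Eventually.of_forall fun θ => w.norm_coe_le_norm _)
  -- the linear functional
  set T₀ : C(K, ℂ) →ₗ[ℂ] ℂ :=
    { toFun := fun w => ∫ θ, (F θ * w (pm θ) + G θ * w (ps θ)) ∂circleMeasure
      map_add' := by
        intro w v
        have e : (fun θ => F θ * (w + v) (pm θ) + G θ * (w + v) (ps θ))
            = fun θ => (F θ * w (pm θ) + G θ * w (ps θ)) + (F θ * v (pm θ) + G θ * v (ps θ)) := by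
          funext θ
          simp only [ContinuousMap.add_apply]
          ring
        rw [e]
        exact integral_add ((intF w).add (intG w)) ((intF v).add (intG v))
      map_smul' := by
        intro c w
        have e : (fun θ => F θ * (c • w) (pm θ) + G θ * (c • w) (ps θ))
            = fun θ => c * (F θ * w (pm θ) + G θ * w (ps θ)) := by
          funext θ
          simp only [ContinuousMap.smul_apply, smul_eq_mul]
          ring
        simp only [RingHom.id_apply, smul_eq_mul]
        rw [e]
        exact integral_const_mul c _ } with hT₀
  have hbound : ∀ w : C(K, ℂ), ‖T₀ w‖ ≤ ((∫ θ, ‖F θ‖ ∂circleMeasure) + ∫ θ, ‖G θ‖ ∂circleMeasure) * ‖w‖ := by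
    intro w
    have step1 : ‖T₀ w‖ ≤ ∫ θ, ‖F θ * w (pm θ) + G θ * w (ps θ)‖ ∂circleMeasure :=
      norm_integral_le_integral_norm _
    have step2 : ∫ θ, ‖F θ * w (pm θ) + G θ * w (ps θ)‖ ∂circleMeasure
        ≤ ∫ θ, (‖F θ‖ + ‖G θ‖) * ‖w‖ ∂circleMeasure := by
      apply integral_mono ((intF w).add (intG w)).norm ((hF.norm.add hG.norm).mul_const ‖w‖)
      intro θ
      have b1 := w.norm_coe_le_norm (pm θ)
      have b2 := w.norm_coe_le_norm (ps θ)
      have n1 : (0:ℝ) ≤ ‖F θ‖ := norm_nonneg _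
      have n2 : (0:ℝ) ≤ ‖G θ‖ := norm_nonneg _
      have n3 : (0:ℝ) ≤ ‖w (pm θ)‖ := norm_nonneg _
      have n4 : (0:ℝ) ≤ ‖w (ps θ)‖ := norm_nonneg _
      calc ‖F θ * w (pm θ) + G θ * w (ps θ)‖
          ≤ ‖F θ * w (pm θ)‖ + ‖G θ * w (ps θ)‖ := norm_add_le _ _
        _ = ‖F θ‖ * ‖w (pm θ)‖ + ‖G θ‖ * ‖w (ps θ)‖ := by rw [norm_mul, norm_mul]
        _ ≤ (‖F θ‖ + ‖G θ‖) * ‖w‖ := by nlinarith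
    have step3 : ∫ θ, (‖F θ‖ + ‖G θ‖) * ‖w‖ ∂circleMeasure
        = ((∫ θ, ‖F θ‖ ∂circleMeasure) + ∫ θ, ‖G θ‖ ∂circleMeasure) * ‖w‖ := by
      rw [integral_mul_const, integral_add hF.norm hG.norm]
    linarith [step1, step2, le_of_eq step3]
  set Tc := T₀.mkContinuous _ hbound with hTc
  -- characters
  have hcharc : ∀ x : ℝ × ℝ, Continuous fun ξ : K =>
      Complex.exp (-Complex.I * (((x.1 * (ξ : ℝ × ℝ).1 + x.2 * (ξ : ℝ × ℝ).2 : ℝ)) : ℂ)) := by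
    intro x
    apply Complex.continuous_exp.comp
    fun_prop
  set χ : (ℝ × ℝ) → C(K, ℂ) := fun x =>
    ⟨fun ξ => Complex.exp (-Complex.I * (((x.1 * (ξ : ℝ × ℝ).1 + x.2 * (ξ : ℝ × ℝ).2 : ℝ)) : ℂ)),
      hcharc x⟩ with hχ
  set S : Set C(K, ℂ) := Set.range χ with hS
  have hχmul : ∀ x y : ℝ × ℝ, χ x * χ y = χ (x + y) := by
    intro x y
    ext ξ
    simp only [hχ, ContinuousMap.mul_apply, ContinuousMap.coe_mk]
    rw [← Complex.exp_add]
    congr 1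
    simp only [Prod.fst_add, Prod.snd_add]
    push_cast
    ring
  have hχone : χ 0 = 1 := by
    ext ξ
    simp [hχ]
  have hχstar : ∀ x : ℝ × ℝ, star (χ x) = χ (-x) := by
    intro x
    ext ξ
    simp only [hχ, ContinuousMap.star_apply, ContinuousMap.coe_mk]
    rw [RCLike.star_def, ← Complex.exp_conj]
    congr 1
    simp only [map_mul, map_neg, Complex.conj_I, Complex.conj_ofReal, Prod.fst_neg, Prod.snd_neg]
    push_cast
    ring
  set M : Submonoid C(K, ℂ) :=
    { carrier := S
      mul_mem' := by
        rintro a b ⟨x, rfl⟩ ⟨y, rfl⟩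
        exact ⟨x + y, (hχmul x y).symm⟩
      one_mem' := ⟨0, hχone⟩ } with hM
  have hSstar : S ∪ star S = S := by
    apply Set.union_eq_self_of_subset_right
    intro a ha
    rw [Set.mem_star] at ha
    obtain ⟨x, hx⟩ := ha
    exact ⟨-x, (hχstar x).symm.trans (by rw [hx, star_star])⟩
  set A : StarSubalgebra ℂ C(K, ℂ) := StarAlgebra.adjoin ℂ S with hA
  have hsep : A.SeparatesPoints := by
    intro ξ η hne
    set s1 : ℝ := (ξ : ℝ × ℝ).1 - (η : ℝ × ℝ).1 with hs1
    set s2 : ℝ := (ξ : ℝ × ℝ).2 - (η : ℝ × ℝ).2 with hs2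
    have hsne : s1 ≠ 0 ∨ s2 ≠ 0 := by
      by_contra h0
      push_neg at h0
      apply hne
      apply Subtype.ext
      apply Prod.ext
      · have h1 := sub_eq_zero.mp h0.1
        exact h1
      · have h2 := sub_eq_zero.mp h0.2
        exact h2
    have hq : 0 < s1 ^ 2 + s2 ^ 2 := by
      rcases hsne with h1 | h2
      · positivity
      · positivity
    set q : ℝ := s1 ^ 2 + s2 ^ 2 with hqdef
    set x₀ : ℝ × ℝ := (Real.pi / q * s1, Real.pi / q * s2) with hx₀
    refine ⟨_, ⟨χ x₀, StarAlgebra.subset_adjoin ℂ S ⟨x₀, rfl⟩, rfl⟩, ?_⟩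
    set b : ℝ := x₀.1 * (η : ℝ × ℝ).1 + x₀.2 * (η : ℝ × ℝ).2 with hb
    have harg : x₀.1 * (ξ : ℝ × ℝ).1 + x₀.2 * (ξ : ℝ × ℝ).2 = b + Real.pi := by
      rw [hb, hx₀]
      have e1 : (ξ : ℝ × ℝ).1 = (η : ℝ × ℝ).1 + s1 := by rw [hs1]; ring
      have e2 : (ξ : ℝ × ℝ).2 = (η : ℝ × ℝ).2 + s2 := by rw [hs2]; ring
      rw [e1, e2]
      field_simp
      ring
    simp only [hχ, ContinuousMap.coe_mk]
    rw [harg]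
    have hkey : Complex.exp (-Complex.I * ((b + Real.pi : ℝ) : ℂ))
        = - Complex.exp (-Complex.I * (b : ℂ)) := by
      have : (-Complex.I * ((b + Real.pi : ℝ) : ℂ))
          = (-Complex.I * (b : ℂ)) + (-((Real.pi : ℂ) * Complex.I)) := by
        push_cast
        ring
      rw [this, Complex.exp_add, Complex.exp_neg, Complex.exp_pi_mul_I,
        show ((-1 : ℂ))⁻¹ = -1 by norm_num, mul_neg_one]
    rw [hkey]
    intro hcon
    have h0 := Complex.exp_ne_zero (-Complex.I * (b : ℂ))
    apply h0
    have h2 : (2 : ℂ) * Complex.exp (-Complex.I * (b : ℂ)) = 0 := by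
      linear_combination -hcon
    exact (mul_eq_zero.mp h2).resolve_left two_ne_zero
  have htop := ContinuousMap.starSubalgebra_topologicalClosure_eq_top_of_separatesPoints A hsep
  have hdense : Dense (A : Set C(K, ℂ)) := by
    rw [dense_iff_closure_eq, ← StarSubalgebra.topologicalClosure_coe, htop]
    rfl
  have hTS : ∀ x : ℝ × ℝ, Tc (χ x) = 0 := by
    intro x
    have hTcx : Tc (χ x) = ∫ θ, (F θ * (χ x) (pm θ) + G θ * (χ x) (ps θ)) ∂circleMeasure := rfl
    rw [hTcx, ← h x]
    apply integral_congr_ae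
    apply Filter.Eventually.of_forall
    intro θ
    simp only [hχ, hpm, hps, ContinuousMap.coe_mk]
    have e1 : x.1 * (kp * Real.cos θ) + x.2 * (kp * Real.sin θ)
        = kp * (x.1 * Real.cos θ + x.2 * Real.sin θ) := by ring
    have e2 : x.1 * (ks * Real.cos θ) + x.2 * (ks * Real.sin θ)
        = ks * (x.1 * Real.cos θ + x.2 * Real.sin θ) := by ring
    rw [e1, e2]
  have hspan : ∀ w ∈ Submodule.span ℂ S, Tc w = 0 := by
    intro w hw
    induction hw using Submodule.span_induction with
    | mem x hx =>
        obtain ⟨y, rfl⟩ := hx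
        exact hTS y
    | zero => exact map_zero Tc
    | add x y hx hy ihx ihy => rw [map_add, ihx, ihy, add_zero]
    | smul c x hx ih => rw [ContinuousLinearMap.map_smul, ih, smul_zero]
  have hAsub : (A : Set C(K, ℂ)) ⊆ {w | Tc w = 0} := by
    intro w hw
    apply hspan
    have h1 : w ∈ Subalgebra.toSubmodule A.toSubalgebra := hw
    rw [hA, StarAlgebra.adjoin_eq_span, hSstar] at h1
    have h2 : Submonoid.closure S = M := by
      conv_lhs => rw [show S = (M : Set C(K, ℂ)) from rfl]
      exact Submonoid.closure_eq M
    rw [h2] at h1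
    exact h1
  have hTeq : ⇑Tc = (fun _ : C(K, ℂ) => (0 : ℂ)) :=
    Continuous.ext_on hdense Tc.continuous continuous_const (fun w hw => hAsub hw)
  intro w
  have h0 := congrFun hTeq (w.restrict K)
  have hTcw : Tc (w.restrict K)
      = ∫ θ, (F θ * w (kp * Real.cos θ, kp * Real.sin θ) +
              G θ * w (ks * Real.cos θ, ks * Real.sin θ)) ∂circleMeasure := rfl
  rw [hTcw] at h0
  exact h0


lemma coeff_extract {kp ks : ℝ} (hkp : 0 < kp) (hlt : kp < ks) (F G : ℝ → ℂ)
    (hsw : ∀ w : C(ℝ × ℝ, ℂ),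
      ∫ θ, (F θ * w (kp * Real.cos θ, kp * Real.sin θ) +
            G θ * w (ks * Real.cos θ, ks * Real.sin θ)) ∂circleMeasure = 0) :
    (∀ n : ℤ, ∫ θ, F θ * Complex.exp (n * θ * Complex.I) ∂circleMeasure = 0) ∧
    (∀ n : ℤ, ∫ θ, G θ * Complex.exp (n * θ * Complex.I) ∂circleMeasure = 0) := by
  have hkp0 : ((kp : ℝ) : ℂ) ≠ 0 := Complex.ofReal_ne_zero.mpr (ne_of_gt hkp)
  have hne : ((ks : ℂ) ^ 2 - (kp : ℂ) ^ 2) ≠ 0 := by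
    have h2 : kp ^ 2 < ks ^ 2 := by nlinarith
    have h3 : ((ks : ℂ)) ^ 2 ≠ ((kp : ℂ)) ^ 2 := by
      intro hcon
      have : (ks : ℝ) ^ 2 = kp ^ 2 := by exact_mod_cast hcon
      nlinarith
    exact sub_ne_zero.mpr h3
  have hcs : ∀ θ : ℝ, Complex.cos (θ : ℂ) ^ 2 + Complex.sin (θ : ℂ) ^ 2 = 1 := fun θ =>
    Complex.cos_sq_add_sin_sq (θ : ℂ)
  have mainF : ∀ (c : ℂ) (m : ℕ),
      ∫ θ, F θ * ((Real.cos θ : ℂ) + c * (Real.sin θ : ℂ)) ^ m ∂circleMeasure = 0 := by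
    intro c m
    set w : C(ℝ × ℝ, ℂ) :=
      ⟨fun ξ => (((ks : ℂ) ^ 2 - ((ξ.1 : ℂ) ^ 2 + (ξ.2 : ℂ) ^ 2)) / ((ks : ℂ) ^ 2 - (kp : ℂ) ^ 2)) *
        (((ξ.1 : ℂ) + c * (ξ.2 : ℂ)) / (kp : ℂ)) ^ m, by fun_prop⟩ with hw
    rw [← hsw w]
    apply integral_congr_ae
    apply Filter.Eventually.of_forall
    intro θ
    dsimp only
    have e1 : w (kp * Real.cos θ, kp * Real.sin θ) = ((Real.cos θ : ℂ) + c * (Real.sin θ : ℂ)) ^ m := by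
      simp only [hw, ContinuousMap.coe_mk]
      have n1 : ((ks : ℂ) ^ 2 - (((kp * Real.cos θ : ℝ) : ℂ) ^ 2 + ((kp * Real.sin θ : ℝ) : ℂ) ^ 2))
          / ((ks : ℂ) ^ 2 - (kp : ℂ) ^ 2) = 1 := by
        rw [div_eq_one_iff_eq hne]
        push_cast
        linear_combination (-(kp : ℂ) ^ 2) * hcs θ
      have n2 : (((kp * Real.cos θ : ℝ) : ℂ) + c * ((kp * Real.sin θ : ℝ) : ℂ)) / (kp : ℂ)
          = (Real.cos θ : ℂ) + c * (Real.sin θ : ℂ) := by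
        rw [div_eq_iff hkp0]; push_cast; ring
      rw [n1, n2, one_mul]
    have e2 : w (ks * Real.cos θ, ks * Real.sin θ) = 0 := by
      simp only [hw, ContinuousMap.coe_mk]
      have n1 : ((ks : ℂ) ^ 2 - (((ks * Real.cos θ : ℝ) : ℂ) ^ 2 + ((ks * Real.sin θ : ℝ) : ℂ) ^ 2)) = 0 := by
        push_cast
        linear_combination (-(ks : ℂ) ^ 2) * hcs θ
      rw [n1, zero_div, zero_mul]
    rw [e1, e2, mul_zero, add_zero]
  have mainG : ∀ (c : ℂ) (m : ℕ),
      ∫ θ, G θ * ((Real.cos θ : ℂ) + c * (Real.sin θ : ℂ)) ^ m ∂circleMeasure = 0 := by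
    intro c m
    set w : C(ℝ × ℝ, ℂ) :=
      ⟨fun ξ => ((((ξ.1 : ℂ) ^ 2 + (ξ.2 : ℂ) ^ 2) - (kp : ℂ) ^ 2) / ((ks : ℂ) ^ 2 - (kp : ℂ) ^ 2)) *
        (((ξ.1 : ℂ) + c * (ξ.2 : ℂ)) / (ks : ℂ)) ^ m, by fun_prop⟩ with hw
    rw [← hsw w]
    apply integral_congr_ae
    apply Filter.Eventually.of_forall
    intro θ
    dsimp only
    have hks0 : ((ks : ℝ) : ℂ) ≠ 0 := Complex.ofReal_ne_zero.mpr (ne_of_gt (hkp.trans hlt))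
    have e1 : w (kp * Real.cos θ, kp * Real.sin θ) = 0 := by
      simp only [hw, ContinuousMap.coe_mk]
      have n1 : ((((kp * Real.cos θ : ℝ) : ℂ) ^ 2 + ((kp * Real.sin θ : ℝ) : ℂ) ^ 2) - (kp : ℂ) ^ 2) = 0 := by
        push_cast
        linear_combination ((kp : ℂ) ^ 2) * hcs θ
      rw [n1, zero_div, zero_mul]
    have e2 : w (ks * Real.cos θ, ks * Real.sin θ) = ((Real.cos θ : ℂ) + c * (Real.sin θ : ℂ)) ^ m := by
      simp only [hw, ContinuousMap.coe_mk]
      have n1 : ((((ks * Real.cos θ : ℝ) : ℂ) ^ 2 + ((ks * Real.sin θ : ℝ) : ℂ) ^ 2) - (kp : ℂ) ^ 2)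
          / ((ks : ℂ) ^ 2 - (kp : ℂ) ^ 2) = 1 := by
        rw [div_eq_one_iff_eq hne]
        push_cast
        linear_combination ((ks : ℂ) ^ 2) * hcs θ
      have n2 : (((ks * Real.cos θ : ℝ) : ℂ) + c * ((ks * Real.sin θ : ℝ) : ℂ)) / (ks : ℂ)
          = (Real.cos θ : ℂ) + c * (Real.sin θ : ℂ) := by
        rw [div_eq_iff hks0]; push_cast; ring
      rw [n1, n2, one_mul]
    rw [e1, e2, mul_zero, zero_add]
  have hpow : ∀ n : ℤ, ∃ (c : ℂ) (m : ℕ), ∀ θ : ℝ,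
      ((Real.cos θ : ℂ) + c * (Real.sin θ : ℂ)) ^ m = Complex.exp (n * θ * Complex.I) := by
    intro n
    rcases le_or_gt 0 n with hn | hn
    · refine ⟨Complex.I, n.toNat, fun θ => ?_⟩
      have hbase : (Real.cos θ : ℂ) + Complex.I * (Real.sin θ : ℂ) = Complex.exp (θ * Complex.I) := by
        rw [Complex.exp_mul_I, ← Complex.ofReal_cos, ← Complex.ofReal_sin]; ring
      rw [hbase, ← Complex.exp_nat_mul]
      congr 1
      have hc : ((n.toNat : ℂ)) = (n : ℂ) := by exact_mod_cast Int.toNat_of_nonneg hn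
      rw [hc]; ring
    · refine ⟨-Complex.I, (-n).toNat, fun θ => ?_⟩
      have hbase : (Real.cos θ : ℂ) + (-Complex.I) * (Real.sin θ : ℂ)
          = Complex.exp ((-(θ : ℂ)) * Complex.I) := by
        rw [Complex.exp_mul_I, Complex.cos_neg, Complex.sin_neg, ← Complex.ofReal_cos,
          ← Complex.ofReal_sin]
        ring
      rw [hbase, ← Complex.exp_nat_mul]
      congr 1
      have hc : (((-n).toNat : ℂ)) = ((-n : ℤ) : ℂ) := by
        exact_mod_cast Int.toNat_of_nonneg (neg_nonneg.mpr hn.le)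
      rw [hc]; push_cast; ring
  constructor
  · intro n
    obtain ⟨c, m, hcm⟩ := hpow n
    rw [← mainF c m]
    apply integral_congr_ae
    apply Filter.Eventually.of_forall
    intro θ
    dsimp only
    rw [hcm θ]
  · intro n
    obtain ⟨c, m, hcm⟩ := hpow n
    rw [← mainG c m]
    apply integral_congr_ae
    apply Filter.Eventually.of_forall
    intro θ
    dsimp only
    rw [hcm θ]

/-- norm of the exponential character -/
lemma expnorm (m : ℤ) (θ : ℝ) : ‖Complex.exp ((m : ℂ) * (θ : ℂ) * Complex.I)‖ = 1 := by
  rw [Complex.norm_exp]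
  simp

lemma contExp (m : ℤ) : Continuous fun θ : ℝ => Complex.exp ((m : ℂ) * (θ : ℂ) * Complex.I) := by
  apply Complex.continuous_exp.comp
  fun_prop

/-- integrability of trig-multiplied integrand -/
lemma intTrig {f : ℝ → ℂ} (hf : Integrable f circleMeasure) (k : ℂ) {φ : ℝ → ℝ}
    (hφc : Continuous φ) (hφb : ∀ θ, |φ θ| ≤ 1) (m : ℤ) :
    Integrable (fun θ => k * ((φ θ : ℂ) * f θ * Complex.exp ((m : ℂ) * (θ : ℂ) * Complex.I)))
      circleMeasure := by
  have e : (fun θ => k * ((φ θ : ℂ) * f θ * Complex.exp ((m : ℂ) * (θ : ℂ) * Complex.I)))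
      = fun θ => (k * (φ θ : ℂ) * Complex.exp ((m : ℂ) * (θ : ℂ) * Complex.I)) * f θ := by
    funext θ; ring
  rw [e]
  apply int_mul hf (C := ‖k‖)
  · exact (continuous_const.mul (Complex.continuous_ofReal.comp hφc)).mul (contExp m)
  · intro θ
    rw [norm_mul, norm_mul, expnorm, mul_one, Complex.norm_real, Real.norm_eq_abs]
    have h1 := hφb θ
    have h2 : (0:ℝ) ≤ ‖k‖ := norm_nonneg _
    have h3 : (0:ℝ) ≤ |φ θ| := abs_nonneg _
    nlinarith

theorem herglotz_wave_function_kernel_injective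
    -- Lamé constants and frequency
    (lam mu om kp ks : ℝ)
    (hmu : 0 < mu) (hlm : 0 < lam + mu) (hom : 0 < om)
    -- compressional and shear wavenumbers
    (hkp : kp = om / Real.sqrt (lam + 2 * mu))
    (hks : ks = om / Real.sqrt mu)
    -- the Herglotz kernel g = (g_p, g_s) ∈ 𝓛²(𝕊)
    (gp gs : ℝ → ℂ)
    (hgp : MemLp gp 2 circleMeasure)
    (hgs : MemLp gs 2 circleMeasure)
    -- hypothesis: v_g(x) = 0 for all x ∈ ℝ² (first and second components)
    (hvanish : ∀ x : ℝ × ℝ,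
      (Complex.exp (-(Real.pi / 4 : ℝ) * Complex.I) *
        ∫ θ in Set.Ioc (0 : ℝ) (2 * Real.pi),
          ((Real.sqrt (kp / om) : ℂ) * (Real.cos θ : ℂ) *
              Complex.exp (-Complex.I * ((kp * (x.1 * Real.cos θ + x.2 * Real.sin θ) : ℝ) : ℂ)) *
              gp θ
            + (Real.sqrt (ks / om) : ℂ) * ((-Real.sin θ : ℝ) : ℂ) *
              Complex.exp (-Complex.I * ((ks * (x.1 * Real.cos θ + x.2 * Real.sin θ) : ℝ) : ℂ)) *
              gs θ) = 0)
      ∧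
      (Complex.exp (-(Real.pi / 4 : ℝ) * Complex.I) *
        ∫ θ in Set.Ioc (0 : ℝ) (2 * Real.pi),
          ((Real.sqrt (kp / om) : ℂ) * (Real.sin θ : ℂ) *
              Complex.exp (-Complex.I * ((kp * (x.1 * Real.cos θ + x.2 * Real.sin θ) : ℝ) : ℂ)) *
              gp θ
            + (Real.sqrt (ks / om) : ℂ) * (Real.cos θ : ℂ) *
              Complex.exp (-Complex.I * ((ks * (x.1 * Real.cos θ + x.2 * Real.sin θ) : ℝ) : ℂ)) *
              gs θ) = 0)) :
    -- conclusion: g = 0, i.e. g_p = 0 and g_s = 0 as elements of L²(𝕊)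
    gp =ᵐ[circleMeasure] 0 ∧ gs =ᵐ[circleMeasure] 0 := by
  -- basic positivity
  have hsq1 : 0 < Real.sqrt (lam + 2 * mu) := Real.sqrt_pos.mpr (by linarith)
  have hsq2 : 0 < Real.sqrt mu := Real.sqrt_pos.mpr hmu
  have hkp0 : 0 < kp := by rw [hkp]; exact div_pos hom hsq1
  have hks0 : 0 < ks := by rw [hks]; exact div_pos hom hsq2
  have hlt : kp < ks := by
    rw [hkp, hks]
    exact div_lt_div_of_pos_left hom hsq2 (Real.sqrt_lt_sqrt hmu.le (by linarith))
  set c1 : ℝ := Real.sqrt (kp / om) with hc1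
  set c2 : ℝ := Real.sqrt (ks / om) with hc2
  have hc1p : 0 < c1 := Real.sqrt_pos.mpr (div_pos hkp0 hom)
  have hc2p : 0 < c2 := Real.sqrt_pos.mpr (div_pos hks0 hom)
  have hgpI : Integrable gp circleMeasure := hgp.integrable one_le_two
  have hgsI : Integrable gs circleMeasure := hgs.integrable one_le_two
  have hmeq : circleMeasure = volume.restrict (Set.Ioc (0 : ℝ) (2 * Real.pi)) := rfl
  -- the four kernels
  set F₁ : ℝ → ℂ := fun θ => (c1 : ℂ) * (Real.cos θ : ℂ) * gp θ with hF₁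
  set G₁ : ℝ → ℂ := fun θ => (c2 : ℂ) * ((-Real.sin θ : ℝ) : ℂ) * gs θ with hG₁
  set F₂ : ℝ → ℂ := fun θ => (c1 : ℂ) * (Real.sin θ : ℂ) * gp θ with hF₂
  set G₂ : ℝ → ℂ := fun θ => (c2 : ℂ) * (Real.cos θ : ℂ) * gs θ with hG₂
  -- integrability of the kernels
  have hF₁I : Integrable F₁ circleMeasure := by
    rw [hF₁]
    apply int_mul hgpI (φ := fun θ => (c1 : ℂ) * (Real.cos θ : ℂ)) (C := c1) (by fun_prop)
    intro θ
    rw [norm_mul, Complex.norm_real, Complex.norm_real, Real.norm_eq_abs, Real.norm_eq_abs,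
      abs_of_nonneg hc1p.le]
    have := Real.abs_cos_le_one θ
    nlinarith
  have hG₁I : Integrable G₁ circleMeasure := by
    rw [hG₁]
    apply int_mul hgsI (φ := fun θ => (c2 : ℂ) * ((-Real.sin θ : ℝ) : ℂ)) (C := c2) (by fun_prop)
    intro θ
    rw [norm_mul, Complex.norm_real, Complex.norm_real, Real.norm_eq_abs, Real.norm_eq_abs,
      abs_of_nonneg hc2p.le, abs_neg]
    have := Real.abs_sin_le_one θ
    nlinarith
  have hF₂I : Integrable F₂ circleMeasure := by
    rw [hF₂]
    apply int_mul hgpI (φ := fun θ => (c1 : ℂ) * (Real.sin θ : ℂ)) (C := c1) (by fun_prop)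
    intro θ
    rw [norm_mul, Complex.norm_real, Complex.norm_real, Real.norm_eq_abs, Real.norm_eq_abs,
      abs_of_nonneg hc1p.le]
    have := Real.abs_sin_le_one θ
    nlinarith
  have hG₂I : Integrable G₂ circleMeasure := by
    rw [hG₂]
    apply int_mul hgsI (φ := fun θ => (c2 : ℂ) * (Real.cos θ : ℂ)) (C := c2) (by fun_prop)
    intro θ
    rw [norm_mul, Complex.norm_real, Complex.norm_real, Real.norm_eq_abs, Real.norm_eq_abs,
      abs_of_nonneg hc2p.le]
    have := Real.abs_cos_le_one θ
    nlinarith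
  -- the vanishing hypotheses in sw_key form
  have hx1 : ∀ x : ℝ × ℝ,
      ∫ θ, (F₁ θ * Complex.exp (-Complex.I * ((kp * (x.1 * Real.cos θ + x.2 * Real.sin θ) : ℝ) : ℂ)) +
            G₁ θ * Complex.exp (-Complex.I * ((ks * (x.1 * Real.cos θ + x.2 * Real.sin θ) : ℝ) : ℂ)))
        ∂circleMeasure = 0 := by
    intro x
    have h1 := (mul_eq_zero.mp (hvanish x).1).resolve_left (Complex.exp_ne_zero _)
    rw [hmeq, ← h1]
    apply integral_congr_ae
    apply Filter.Eventually.of_forall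
    intro θ
    simp only [hF₁, hG₁]
    ring
  have hx2 : ∀ x : ℝ × ℝ,
      ∫ θ, (F₂ θ * Complex.exp (-Complex.I * ((kp * (x.1 * Real.cos θ + x.2 * Real.sin θ) : ℝ) : ℂ)) +
            G₂ θ * Complex.exp (-Complex.I * ((ks * (x.1 * Real.cos θ + x.2 * Real.sin θ) : ℝ) : ℂ)))
        ∂circleMeasure = 0 := by
    intro x
    have h1 := (mul_eq_zero.mp (hvanish x).2).resolve_left (Complex.exp_ne_zero _)
    rw [hmeq, ← h1]
    apply integral_congr_ae
    apply Filter.Eventually.of_forall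
    intro θ
    simp only [hF₂, hG₂]
    ring
  obtain ⟨hA1, hB1⟩ := coeff_extract hkp0 hlt F₁ G₁ (sw_key hkp0 hlt hF₁I hG₁I hx1)
  obtain ⟨hA2, hB2⟩ := coeff_extract hkp0 hlt F₂ G₂ (sw_key hkp0 hlt hF₂I hG₂I hx2)
  -- cancel the constants
  have hc1ne : ((c1 : ℝ) : ℂ) ≠ 0 := Complex.ofReal_ne_zero.mpr hc1p.ne'
  have hc2ne : ((c2 : ℝ) : ℂ) ≠ 0 := Complex.ofReal_ne_zero.mpr hc2p.ne'
  have hcosgp : ∀ n : ℤ,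
      ∫ θ, (Real.cos θ : ℂ) * gp θ * Complex.exp ((n : ℂ) * (θ : ℂ) * Complex.I) ∂circleMeasure = 0 := by
    intro n
    have h1 := hA1 n
    rw [show (fun θ => F₁ θ * Complex.exp ((n : ℂ) * (θ : ℂ) * Complex.I))
        = fun θ => (c1 : ℂ) * ((Real.cos θ : ℂ) * gp θ * Complex.exp ((n : ℂ) * (θ : ℂ) * Complex.I))
        from by funext θ; simp only [hF₁]; ring, integral_const_mul] at h1
    exact (mul_eq_zero.mp h1).resolve_left hc1ne
  have hsingp : ∀ n : ℤ,
      ∫ θ, (Real.sin θ : ℂ) * gp θ * Complex.exp ((n : ℂ) * (θ : ℂ) * Complex.I) ∂circleMeasure = 0 := by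
    intro n
    have h1 := hA2 n
    rw [show (fun θ => F₂ θ * Complex.exp ((n : ℂ) * (θ : ℂ) * Complex.I))
        = fun θ => (c1 : ℂ) * ((Real.sin θ : ℂ) * gp θ * Complex.exp ((n : ℂ) * (θ : ℂ) * Complex.I))
        from by funext θ; simp only [hF₂]; ring, integral_const_mul] at h1
    exact (mul_eq_zero.mp h1).resolve_left hc1ne
  have hsings : ∀ n : ℤ,
      ∫ θ, (Real.sin θ : ℂ) * gs θ * Complex.exp ((n : ℂ) * (θ : ℂ) * Complex.I) ∂circleMeasure = 0 := by
    intro n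
    have h1 := hB1 n
    rw [show (fun θ => G₁ θ * Complex.exp ((n : ℂ) * (θ : ℂ) * Complex.I))
        = fun θ => (-(c2 : ℂ)) * ((Real.sin θ : ℂ) * gs θ * Complex.exp ((n : ℂ) * (θ : ℂ) * Complex.I))
        from by funext θ; simp only [hG₁]; push_cast; ring, integral_const_mul] at h1
    exact (mul_eq_zero.mp h1).resolve_left (neg_ne_zero.mpr hc2ne)
  have hcosgs : ∀ n : ℤ,
      ∫ θ, (Real.cos θ : ℂ) * gs θ * Complex.exp ((n : ℂ) * (θ : ℂ) * Complex.I) ∂circleMeasure = 0 := by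
    intro n
    have h1 := hB2 n
    rw [show (fun θ => G₂ θ * Complex.exp ((n : ℂ) * (θ : ℂ) * Complex.I))
        = fun θ => (c2 : ℂ) * ((Real.cos θ : ℂ) * gs θ * Complex.exp ((n : ℂ) * (θ : ℂ) * Complex.I))
        from by funext θ; simp only [hG₂]; ring, integral_const_mul] at h1
    exact (mul_eq_zero.mp h1).resolve_left hc2ne
  -- combination: all Fourier coefficients of gp and gs vanish
  have combine : ∀ (f : ℝ → ℂ), Integrable f circleMeasure →
      (∀ n : ℤ, ∫ θ, (Real.cos θ : ℂ) * f θ * Complex.exp ((n : ℂ) * (θ : ℂ) * Complex.I) ∂circleMeasure = 0) →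
      (∀ n : ℤ, ∫ θ, (Real.sin θ : ℂ) * f θ * Complex.exp ((n : ℂ) * (θ : ℂ) * Complex.I) ∂circleMeasure = 0) →
      ∀ n : ℤ, ∫ θ, f θ * Complex.exp ((n : ℂ) * (θ : ℂ) * Complex.I) ∂circleMeasure = 0 := by
    intro f hfI hcos hsin n
    set A : ℝ → ℂ := fun θ =>
      (1/2 : ℂ) * ((Real.cos θ : ℂ) * f θ * Complex.exp (((n+1 : ℤ) : ℂ) * (θ : ℂ) * Complex.I)) with hA
    set B : ℝ → ℂ := fun θ =>
      (1/2 : ℂ) * ((Real.cos θ : ℂ) * f θ * Complex.exp (((n-1 : ℤ) : ℂ) * (θ : ℂ) * Complex.I)) with hB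
    set C : ℝ → ℂ := fun θ =>
      (-(Complex.I)/2) * ((Real.sin θ : ℂ) * f θ * Complex.exp (((n+1 : ℤ) : ℂ) * (θ : ℂ) * Complex.I)) with hC
    set D : ℝ → ℂ := fun θ =>
      (Complex.I/2) * ((Real.sin θ : ℂ) * f θ * Complex.exp (((n-1 : ℤ) : ℂ) * (θ : ℂ) * Complex.I)) with hD
    have key : (fun θ => f θ * Complex.exp ((n : ℂ) * (θ : ℂ) * Complex.I))
        = fun θ => A θ + B θ + C θ + D θ := by
      funext θ
      simp only [hA, hB, hC, hD]
      have e1 : Complex.exp (((n+1 : ℤ) : ℂ) * (θ : ℂ) * Complex.I)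
          = Complex.exp ((n : ℂ) * (θ : ℂ) * Complex.I) * Complex.exp ((θ : ℂ) * Complex.I) := by
        rw [← Complex.exp_add]; congr 1; push_cast; ring
      have e2 : Complex.exp (((n-1 : ℤ) : ℂ) * (θ : ℂ) * Complex.I)
          = Complex.exp ((n : ℂ) * (θ : ℂ) * Complex.I) * Complex.exp ((-(θ : ℂ)) * Complex.I) := by
        rw [← Complex.exp_add]; congr 1; push_cast; ring
      have e3 := Complex.exp_mul_I (θ : ℂ)
      have e4 : Complex.exp ((-(θ : ℂ)) * Complex.I)
          = Complex.cos (θ : ℂ) - Complex.sin (θ : ℂ) * Complex.I := by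
        rw [Complex.exp_mul_I, Complex.cos_neg, Complex.sin_neg]; ring
      rw [e1, e2, e3, e4, Complex.ofReal_cos, Complex.ofReal_sin]
      have hcs := Complex.cos_sq_add_sin_sq (θ : ℂ)
      linear_combination (-(f θ * Complex.exp ((n : ℂ) * (θ : ℂ) * Complex.I))) * hcs
        + (f θ * Complex.exp ((n : ℂ) * (θ : ℂ) * Complex.I) * Complex.sin (θ : ℂ) ^ 2) * Complex.I_sq
    have t1 : Integrable A circleMeasure :=
      intTrig hfI (1/2 : ℂ) Real.continuous_cos Real.abs_cos_le_one (n+1)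
    have t2 : Integrable B circleMeasure :=
      intTrig hfI (1/2 : ℂ) Real.continuous_cos Real.abs_cos_le_one (n-1)
    have t3 : Integrable C circleMeasure :=
      intTrig hfI (-(Complex.I)/2) Real.continuous_sin Real.abs_sin_le_one (n+1)
    have t4 : Integrable D circleMeasure :=
      intTrig hfI (Complex.I/2) Real.continuous_sin Real.abs_sin_le_one (n-1)
    have t12 : Integrable (fun θ => A θ + B θ) circleMeasure := t1.add t2
    have t123 : Integrable (fun θ => A θ + B θ + C θ) circleMeasure := t12.add t3
    have vA : ∫ θ, A θ ∂circleMeasure = 0 := by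
      simp only [hA]; rw [integral_const_mul, hcos (n+1), mul_zero]
    have vB : ∫ θ, B θ ∂circleMeasure = 0 := by
      simp only [hB]; rw [integral_const_mul, hcos (n-1), mul_zero]
    have vC : ∫ θ, C θ ∂circleMeasure = 0 := by
      simp only [hC]; rw [integral_const_mul, hsin (n+1), mul_zero]
    have vD : ∫ θ, D θ ∂circleMeasure = 0 := by
      simp only [hD]; rw [integral_const_mul, hsin (n-1), mul_zero]
    rw [key, integral_add t123 t4, integral_add t12 t3, integral_add t1 t2,
      vA, vB, vC, vD]
    ring
  have hgpn := combine gp hgpI hcosgp hsingp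
  have hgsn := combine gs hgsI hcosgs hsings
  exact ⟨fourier_uniq hgp hgpn, fourier_uniq hgs hgsn⟩
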